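/- Level-1 structure for cubics: Let φ be a cubic polynomial over L with distinct critical points ω⁺, ω⁻ such that R_φ = diam K(φ), φ(ω⁺) lies in the level-0 ball D₀, and ω⁻ ∉ K(φ). Then: φ(ω⁻) ∉ D₀; there are exactly two level-1 balls, namely D₁(ω⁺) containing ω⁺ and D₁(γ⁺) containing the cocritical point γ⁺ (the point with φ(γ⁺) = φ(ω⁺), γ⁺ ≠ ω⁺); the map φ : D₁(ω⁺) → D₀ has degree 2 and φ : D₁(γ⁺) → D₀ has degree 1. -/

import Mathlib

open Polynomial Metric Set

/-- The filled Julia set: points whose forward orbit does not escape to infinity. -/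
def filledJulia {L : Type*} [NormedField L] (φ : Polynomial L) : Set L :=
  {z | ¬ Filter.Tendsto (fun n => ‖(fun w => φ.eval w)^[n] z‖) Filter.atTop Filter.atTop}

/-- The Julia set, the boundary of the filled Julia set. -/
def juliaSet {L : Type*} [NormedField L] (φ : Polynomial L) : Set L :=
  frontier (filledJulia φ)

/-- The standard escape radius `R_φ`. -/
noncomputable def escapeRadius {L : Type*} [NormedField L] (φ : Polynomial L) : ℝ :=
  max (‖φ.leadingCoeff⁻¹‖ ^ ((1 : ℝ) / ((φ.natDegree : ℝ) - 1)))
    (⨆ i : Finset.range φ.natDegree,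
      ‖φ.coeff i / φ.leadingCoeff‖ ^ ((1 : ℝ) / ((φ.natDegree : ℝ) - (i : ℕ))))

/-- A (closed) ball of positive radius. -/
def IsClosedBall {L : Type*} [NormedField L] (B : Set L) : Prop :=
  ∃ a : L, ∃ r : ℝ, 0 < r ∧ B = Metric.closedBall a r

/-- A dynamical ball of level `n`: a maximal closed ball inside `φ^{-n}(D₀)` where
`D₀ = B⁺_{R_φ}(0)` is the level-0 ball. -/
def IsDynBall {L : Type*} [NormedField L] (φ : Polynomial L) (n : ℕ) (B : Set L) : Prop :=
  IsClosedBall B ∧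
    B ⊆ (fun z => φ.eval z)^[n] ⁻¹' (Metric.closedBall 0 (escapeRadius φ)) ∧
    ∀ B', IsClosedBall B' → B ⊆ B' →
      B' ⊆ (fun z => φ.eval z)^[n] ⁻¹' (Metric.closedBall 0 (escapeRadius φ)) → B' = B

/-- An end: a nested sequence of dynamical balls, one of each level. -/
def IsEnd {L : Type*} [NormedField L] (φ : Polynomial L) (E : ℕ → Set L) : Prop :=
  ∀ n, IsDynBall φ n (E n) ∧ E (n + 1) ⊆ E n

/-- The local degree `deg_z(φ)`: the multiplicity of `z` as a root of `φ - φ(z)`. -/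
noncomputable def localDeg {K : Type*} [CommRing K] (φ : Polynomial K) (z : K) : ℕ :=
  Polynomial.rootMultiplicity z (φ - Polynomial.C (φ.eval z))

/-- `φ : B → B'` has a well-defined degree `d`: every point of `B'` has exactly `d`
preimages in `B` counted with local degree. -/
def HasDegOn {K : Type*} [CommRing K] (φ : Polynomial K) (B B' : Set K) (d : ℕ) : Prop :=
  1 ≤ d ∧ ∀ w ∈ B', (∑ᶠ z ∈ {z ∈ B | φ.eval z = w}, localDeg φ z) = d

/-- A set is infraconnected if it cannot be split by two disjoint closed balls. -/
def Infraconnected {L : Type*} [NormedField L] (X : Set L) : Prop :=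
  ∀ (a₀ : L) (r₀ : ℝ) (a₁ : L) (r₁ : ℝ),
    Disjoint (Metric.closedBall a₀ r₀) (Metric.closedBall a₁ r₁) →
    X ⊆ Metric.closedBall a₀ r₀ ∪ Metric.closedBall a₁ r₁ →
    X ⊆ Metric.closedBall a₀ r₀ ∨ X ⊆ Metric.closedBall a₁ r₁

/-- The infraconnected component of `z` in the filled Julia set: the intersection of all
dynamical balls containing `z`. -/
def infraComp {L : Type*} [NormedField L] (φ : Polynomial L) (z : L) : Set L :=
  {w | ∀ n B, IsDynBall φ n B → z ∈ B → w ∈ B}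

/-- The `p`-th iterate of `φ` as a polynomial. -/
noncomputable def polyIter {L : Type*} [CommRing L] (φ : Polynomial L) : ℕ → Polynomial L
  | 0 => Polynomial.X
  | n + 1 => φ.comp (polyIter φ n)

/-- The cubic family `φ_{α,β}(ζ) = ζ³ - 3α²ζ + β`. -/
noncomputable def cubic {L : Type*} [NormedField L] (α β : L) : Polynomial L :=
  Polynomial.X ^ 3 - Polynomial.C (3 * α ^ 2) * Polynomial.X + Polynomial.C β


lemma coeff_le_escape {L : Type*} [NormedField L] (φ : Polynomial L) (i : ℕ)
    (hi : i ∈ Finset.range φ.natDegree) :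
    ‖φ.coeff i / φ.leadingCoeff‖ ^ ((1:ℝ)/((φ.natDegree : ℝ) - i)) ≤ escapeRadius φ :=
  le_trans (le_ciSup (f := fun j : Finset.range φ.natDegree =>
      ‖φ.coeff (j:ℕ) / φ.leadingCoeff‖ ^ ((1:ℝ)/((φ.natDegree : ℝ) - ((j:ℕ):ℝ))))
    (Set.Finite.bddAbove (Set.finite_range _))
    (⟨i, hi⟩ : Finset.range φ.natDegree)) (le_max_right _ _)

lemma escapeRadius_facts {L : Type*} [NormedField L] (φ : Polynomial L) (h3 : φ.natDegree = 3) :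
    0 < escapeRadius φ ∧ 1 ≤ ‖φ.leadingCoeff‖ * (escapeRadius φ) ^ 2 ∧
      ∀ i : ℕ, i < 3 → ‖φ.coeff i‖ ≤ ‖φ.leadingCoeff‖ * (escapeRadius φ) ^ (3 - i) := by
  have hφne : φ ≠ 0 := fun h => by simp [h] at h3
  have hane : φ.leadingCoeff ≠ 0 := leadingCoeff_ne_zero.mpr hφne
  have hapos : 0 < ‖φ.leadingCoeff‖ := norm_pos_iff.mpr hane
  set a := φ.leadingCoeff with ha
  set R := escapeRadius φ with hR
  have hA : (‖a‖⁻¹) ^ ((1:ℝ)/2) ≤ R := by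
    rw [hR]
    unfold escapeRadius
    rw [h3, ← ha]
    refine le_trans (le_of_eq ?_) (le_max_left _ _)
    rw [norm_inv]
    norm_num
  have hRpos : 0 < R := lt_of_lt_of_le (Real.rpow_pos_of_pos (by positivity) _) hA
  have key : ‖a‖⁻¹ ≤ R ^ 2 := by
    calc ‖a‖⁻¹ = ((‖a‖⁻¹) ^ ((1:ℝ)/2)) ^ (2:ℕ) := by
          rw [← Real.rpow_natCast ((‖a‖⁻¹) ^ ((1:ℝ)/2)) 2, ← Real.rpow_mul (by positivity)]
          norm_num
      _ ≤ R ^ (2:ℕ) := pow_le_pow_left₀ (by positivity) hA 2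
  refine ⟨hRpos, ?_, ?_⟩
  · calc (1:ℝ) = ‖a‖ * ‖a‖⁻¹ := by field_simp
      _ ≤ ‖a‖ * R ^ 2 := by gcongr
  · intro i hi
    have hf : ‖φ.coeff i / a‖ ^ ((1:ℝ)/((3:ℝ) - i)) ≤ R := by
      have hmem : i ∈ Finset.range φ.natDegree := by rw [h3]; exact Finset.mem_range.mpr hi
      have := coeff_le_escape φ i hmem
      rwa [h3, ← ha] at this
      
    have he : (0:ℝ) < (3:ℝ) - i := by
      have : (i:ℝ) < 3 := by exact_mod_cast hi
      linarith
    have hraised : ‖φ.coeff i / a‖ ≤ R ^ ((3:ℝ) - i) := by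
      calc ‖φ.coeff i / a‖
          = (‖φ.coeff i / a‖ ^ ((1:ℝ)/((3:ℝ) - i))) ^ ((3:ℝ) - i) := by
            rw [← Real.rpow_mul (by positivity)]
            field_simp
            simp
        _ ≤ R ^ ((3:ℝ) - i) := Real.rpow_le_rpow (by positivity) hf he.le
    have hcast : R ^ ((3:ℝ) - i) = R ^ (3 - i : ℕ) := by
      rw [← Real.rpow_natCast R (3 - i)]
      congr 1
      push_cast [Nat.cast_sub hi.le]
      ring
    rw [norm_div] at hraised
    rw [hcast] at hraised
    calc ‖φ.coeff i‖ = ‖φ.coeff i‖ / ‖a‖ * ‖a‖ := by field_simp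
      _ ≤ R ^ (3 - i : ℕ) * ‖a‖ := by gcongr
      _ = ‖a‖ * R ^ (3 - i : ℕ) := by ring



lemma cubic_factor {K : Type*} [Field K] (φ : Polynomial K) (h3 : φ.natDegree = 3)
    (ωp γp : K) (hcp : (Polynomial.derivative φ).eval ωp = 0)
    (hγ : φ.eval γp = φ.eval ωp) (hγne : γp ≠ ωp) :
    φ = C φ.leadingCoeff * ((X - C ωp) ^ 2 * (X - C γp)) + C (φ.eval ωp) := by
  set ψ := φ - C (φ.eval ωp) with hψdef
  have hψdeg : ψ.natDegree = 3 := by rw [hψdef, natDegree_sub_C, h3]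
  have hψne : ψ ≠ 0 := fun h => by simp [h] at hψdeg
  have hroot : ψ.IsRoot ωp := by simp [hψdef, IsRoot]
  obtain ⟨q, hq⟩ := dvd_iff_isRoot.mpr hroot
  have hder : Polynomial.derivative ψ = Polynomial.derivative φ := by
    simp [hψdef]
  have hqroot : q.IsRoot ωp := by
    have h1 : Polynomial.derivative ψ = q + (X - C ωp) * Polynomial.derivative q := by
      rw [hq, derivative_mul]; simp
    have := congrArg (Polynomial.eval ωp) h1
    rw [hder] at this
    simpa [hcp] using this.symm
  obtain ⟨q2, hq2⟩ := dvd_iff_isRoot.mpr hqroot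
  have hψq2 : ψ = (X - C ωp) ^ 2 * q2 := by rw [hq, hq2]; ring
  have hq2ne : q2 ≠ 0 := fun h => by simp [h] at hψq2; exact hψne hψq2
  have hXne : ((X - C ωp : Polynomial K) ^ 2) ≠ 0 := pow_ne_zero _ (X_sub_C_ne_zero _)
  have hdeg2 : ((X - C ωp : Polynomial K) ^ 2).natDegree = 2 := by
    simp [natDegree_pow]
  have hq2deg : q2.natDegree = 1 := by
    have := natDegree_mul hXne hq2ne
    rw [← hψq2, hψdeg, hdeg2] at this
    omega
  have hq2root : q2.IsRoot γp := by
    have : ψ.eval γp = 0 := by simp [hψdef, hγ]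
    rw [hψq2] at this
    simp only [eval_mul, eval_pow, eval_sub, eval_X, eval_C] at this
    rcases mul_eq_zero.mp this with h | h
    · exact absurd (pow_eq_zero_iff (by norm_num)|>.mp h) (sub_ne_zero.mpr hγne)
    · exact h
  obtain ⟨r, hr⟩ := dvd_iff_isRoot.mpr hq2root
  have hrne : r ≠ 0 := fun h => by rw [h, mul_zero] at hr; exact hq2ne hr
  have hrdeg : r.natDegree = 0 := by
    have := natDegree_mul (X_sub_C_ne_zero γp (R := K)) hrne
    rw [← hr, hq2deg, natDegree_X_sub_C] at this
    omega
  obtain ⟨c, hc⟩ := natDegree_eq_zero.mp hrdeg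
  have hlead : φ.leadingCoeff = c := by
    have h1 : ψ.leadingCoeff = φ.leadingCoeff := by
      rw [leadingCoeff, leadingCoeff, hψdeg, h3, hψdef]
      simp [coeff_C, h3]
    have h2 : ψ.leadingCoeff = c := by
      rw [hψq2, hr, leadingCoeff_mul, leadingCoeff_mul, leadingCoeff_pow, ← hc]
      simp [leadingCoeff_X_sub_C]
    rw [← h1, h2]
  have : φ = ψ + C (φ.eval ωp) := by rw [hψdef]; ring
  rw [hlead]
  conv_lhs => rw [this, hψq2, hr, ← hc]
  ring



section Helpers
variable {L : Type*} [NormedField L] [IsUltrametricDist L]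

lemma ultra_add_le (x y : L) : ‖x + y‖ ≤ max ‖x‖ ‖y‖ :=
  IsUltrametricDist.norm_add_le_max x y

lemma norm_add_eq_left {x y : L} (h : ‖y‖ < ‖x‖) : ‖x + y‖ = ‖x‖ := by
  refine le_antisymm ((ultra_add_le x y).trans (max_le le_rfl h.le)) ?_
  by_contra hlt
  push_neg at hlt
  have : ‖x‖ ≤ max ‖x + y‖ ‖y‖ := by
    simpa using ultra_add_le (x + y) (-y)
  rcases max_cases ‖x + y‖ ‖y‖ with ⟨he, _⟩ | ⟨he, _⟩ <;> rw [he] at this <;> linarith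

lemma norm_sub_eq_left {x y : L} (h : ‖y‖ < ‖x‖) : ‖x - y‖ = ‖x‖ := by
  rw [sub_eq_add_neg]; exact norm_add_eq_left (by simpa using h)

lemma norm_sub_eq_right {x y : L} (h : ‖x‖ < ‖y‖) : ‖x - y‖ = ‖y‖ := by
  rw [norm_sub_rev]; exact norm_sub_eq_left h

lemma ultra_sub_le (x y : L) : ‖x - y‖ ≤ max ‖x‖ ‖y‖ := by
  rw [sub_eq_add_neg]; simpa using ultra_add_le x (-y)

end Helpers
section Grow
variable {L : Type*} [NormedField L] [IsUltrametricDist L]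

lemma cubic_grow (φ : Polynomial L) (h3 : φ.natDegree = 3) {z : L}
    (hz : escapeRadius φ < ‖z‖) : ‖φ.eval z‖ = ‖φ.leadingCoeff‖ * ‖z‖ ^ 3 := by
  obtain ⟨hRpos, haR, hcoef⟩ := escapeRadius_facts φ h3
  set R := escapeRadius φ
  set a := φ.leadingCoeff with ha
  have hapos : 0 < ‖a‖ := by nlinarith [sq_nonneg R]
  have hzpos : 0 < ‖z‖ := lt_trans hRpos hz
  have key : ∀ i : ℕ, i < 3 → ‖φ.coeff i * z ^ i‖ < ‖a‖ * ‖z‖ ^ 3 := by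
    intro i hi
    rw [norm_mul, norm_pow]
    calc ‖φ.coeff i‖ * ‖z‖ ^ i ≤ (‖a‖ * R ^ (3 - i)) * ‖z‖ ^ i := by
          gcongr
          exact hcoef i hi
      _ < (‖a‖ * ‖z‖ ^ (3 - i)) * ‖z‖ ^ i := by
          have h1 : R ^ (3 - i) < ‖z‖ ^ (3 - i) :=
            pow_lt_pow_left₀ hz hRpos.le (by omega)
          gcongr
      _ = ‖a‖ * ‖z‖ ^ 3 := by
          rw [mul_assoc, ← pow_add]
          congr 2
          omega
  have hlc : φ.coeff 3 = a := by rw [ha, Polynomial.leadingCoeff, h3]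
  have heval : φ.eval z = a * z ^ 3 +
      (φ.coeff 2 * z ^ 2 + (φ.coeff 1 * z ^ 1 + φ.coeff 0 * z ^ 0)) := by
    rw [Polynomial.eval_eq_sum_range, h3]
    simp only [Finset.sum_range_succ, Finset.sum_range_zero, hlc]
    ring
  have hcube : ‖a * z ^ 3‖ = ‖a‖ * ‖z‖ ^ 3 := by rw [norm_mul, norm_pow]
  have hrest : ‖φ.coeff 2 * z ^ 2 + (φ.coeff 1 * z ^ 1 + φ.coeff 0 * z ^ 0)‖
      < ‖a * z ^ 3‖ := by
    rw [hcube]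
    refine lt_of_le_of_lt (ultra_add_le _ _) (max_lt (key 2 (by norm_num)) ?_)
    exact lt_of_le_of_lt (ultra_add_le _ _)
      (max_lt (key 1 (by norm_num)) (key 0 (by norm_num)))
  rw [heval, norm_add_eq_left hrest, hcube]

lemma cubic_escape (φ : Polynomial L) (h3 : φ.natDegree = 3) {z : L}
    (hz : escapeRadius φ < ‖z‖) :
    Filter.Tendsto (fun n => ‖(fun w => φ.eval w)^[n] z‖) Filter.atTop Filter.atTop := by
  obtain ⟨hRpos, haR, hcoef⟩ := escapeRadius_facts φ h3
  set R := escapeRadius φ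
  set a := φ.leadingCoeff with ha
  have hapos : 0 < ‖a‖ := by nlinarith [sq_nonneg R]
  have hzpos : 0 < ‖z‖ := lt_trans hRpos hz
  set c : ℝ := ‖z‖ / R with hc
  have hc1 : 1 < c := (one_lt_div hRpos).mpr hz
  have main : ∀ n : ℕ, R < ‖(fun w => φ.eval w)^[n] z‖ ∧
      c ^ n * ‖z‖ ≤ ‖(fun w => φ.eval w)^[n] z‖ := by
    intro n
    induction n with
    | zero => simpa using hz
    | succ n ih =>
      obtain ⟨hw1, hw2⟩ := ih
      set w := (fun w => φ.eval w)^[n] z with hwdef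
      have hwpos : 0 < ‖w‖ := lt_trans hRpos hw1
      have hstep : ‖(fun w => φ.eval w)^[n+1] z‖ = ‖a‖ * ‖w‖ ^ 3 := by
        rw [Function.iterate_succ_apply', ← hwdef]
        exact cubic_grow φ h3 hw1
      have hcn : (1:ℝ) ≤ c ^ n := one_le_pow₀ hc1.le
      have hwc : c * R ≤ ‖w‖ := by
        have : ‖z‖ = c * R := by rw [hc, div_mul_cancel₀ _ hRpos.ne']
        nlinarith
      have hcpos : 0 < c := lt_trans one_pos hc1
      have hw2' : c ^ 2 * R ^ 2 ≤ ‖w‖ ^ 2 := by nlinarith [mul_pos hcpos hRpos]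
      have hkey0 : c ^ 2 ≤ ‖a‖ * ‖w‖ ^ 2 := by
        have h₁ : ‖a‖ * (c ^ 2 * R ^ 2) ≤ ‖a‖ * ‖w‖ ^ 2 :=
          mul_le_mul_of_nonneg_left hw2' hapos.le
        nlinarith [sq_nonneg c]
      have hkey : c ^ 2 * ‖w‖ ≤ ‖a‖ * ‖w‖ ^ 3 := by nlinarith
      constructor
      · rw [hstep]
        have : (1:ℝ) < c ^ 2 := one_lt_pow₀ hc1 (by norm_num)
        nlinarith
      · rw [hstep]
        have h1 : c ^ (n + 1) * ‖z‖ ≤ c ^ 2 * ‖w‖ := by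
          have : c ^ (n+1) * ‖z‖ = c * (c ^ n * ‖z‖) := by ring
          rw [this]
          have h2 : c * (c ^ n * ‖z‖) ≤ c * ‖w‖ := by nlinarith
          have h3 : c * ‖w‖ ≤ c ^ 2 * ‖w‖ := by nlinarith [mul_nonneg (by nlinarith : (0:ℝ) ≤ c ^ 2 - c) hwpos.le]
          linarith
        linarith
  refine Filter.tendsto_atTop_mono (fun n => (main n).2) ?_
  exact (tendsto_pow_atTop_atTop_of_one_lt hc1).atTop_mul_const hzpos
end Grow
lemma norm_multiset_prod' {L : Type*} [NormedField L] (s : Multiset L) :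
    ‖s.prod‖ = (s.map fun x : L => ‖x‖).prod := by
  induction s using Multiset.induction_on with
  | empty => simp
  | cons a s ih => simp [norm_mul, ih]

lemma multiset_map_prod_const {α : Type*} (s : Multiset α) (f : α → ℝ) (c : ℝ)
    (h : ∀ z ∈ s, f z = c) : (s.map f).prod = c ^ Multiset.card s := by
  induction s using Multiset.induction_on with
  | empty => simp
  | cons a s ih =>
    simp only [Multiset.map_cons, Multiset.prod_cons, Multiset.card_cons]
    rw [h a (Multiset.mem_cons_self a s), ih (fun z hz => h z (Multiset.mem_cons_of_mem hz)),
      pow_succ]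
    ring

set_option maxHeartbeats 2000000 in
/-- **Level-1 structure for cubics.** For a cubic with `R_φ = diam K(φ)`,
`φ(ω⁺) ∈ D₀` and `ω⁻ ∉ K(φ)`: `φ(ω⁻) ∉ D₀`; there are exactly two level-1 balls,
containing `ω⁺` and the cocritical point `γ⁺` respectively, and `φ` has degree 2 on
the former and degree 1 on the latter, onto `D₀`. -/
theorem cubic_level_one_structure {L : Type*} [NormedField L] [IsUltrametricDist L] [CompleteSpace L] [IsAlgClosed L]
    (hdense : ∀ r : ℝ, 0 < r → ∀ ε : ℝ, 0 < ε → ∃ x : L, x ≠ 0 ∧ |‖x‖ - r| < ε)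
    (hres : ∀ q : ℚ, q ≠ 0 → ‖(q : L)‖ = 1)
    (φ : Polynomial L) (h3 : φ.natDegree = 3)
    (ωp ωm γp : L) (hne : ωp ≠ ωm)
    (hcp : (Polynomial.derivative φ).eval ωp = 0)
    (hcm : (Polynomial.derivative φ).eval ωm = 0)
    (hnorm : escapeRadius φ = Metric.diam (filledJulia φ))
    (hvp : φ.eval ωp ∈ Metric.closedBall (0 : L) (escapeRadius φ))
    (hesc : ωm ∉ filledJulia φ)
    (hγ : φ.eval γp = φ.eval ωp) (hγne : γp ≠ ωp) :
    φ.eval ωm ∉ Metric.closedBall (0 : L) (escapeRadius φ) ∧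
    ∃ Bω Bγ : Set L,
      IsDynBall φ 1 Bω ∧ ωp ∈ Bω ∧ IsDynBall φ 1 Bγ ∧ γp ∈ Bγ ∧ Bω ≠ Bγ ∧
      (∀ B, IsDynBall φ 1 B → B = Bω ∨ B = Bγ) ∧
      HasDegOn φ Bω (Metric.closedBall (0 : L) (escapeRadius φ)) 2 ∧
      HasDegOn φ Bγ (Metric.closedBall (0 : L) (escapeRadius φ)) 1 := by
  classical
  obtain ⟨hRpos, haR, hcoef⟩ := escapeRadius_facts φ h3
  have hφne : φ ≠ 0 := fun h => by simp [h] at h3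
  have hane : φ.leadingCoeff ≠ 0 := leadingCoeff_ne_zero.mpr hφne
  have hapos : 0 < ‖φ.leadingCoeff‖ := norm_pos_iff.mpr hane
  set R := escapeRadius φ with hRdef
  set a := φ.leadingCoeff with ha
  set v := φ.eval ωp with hvdef
  have hφeq := cubic_factor φ h3 ωp γp hcp hγ hγne
  rw [← ha, ← hvdef] at hφeq
  have hvR : ‖v‖ ≤ R := by rwa [mem_closedBall_zero_iff] at hvp
  have heval : ∀ z : L, φ.eval z - v = a * ((z - ωp) ^ 2 * (z - γp)) := by
    intro z
    conv_lhs => rw [hφeq]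
    simp only [eval_add, eval_mul, eval_pow, eval_sub, eval_X, eval_C]
    ring
  have hE : ∀ z : L, ‖φ.eval z - v‖ = ‖a‖ * (‖z - ωp‖ ^ 2 * ‖z - γp‖) := by
    intro z
    rw [heval z, norm_mul, norm_mul, norm_pow]
  have hin : ∀ z : L, ‖φ.eval z‖ ≤ R ↔ ‖a‖ * (‖z - ωp‖ ^ 2 * ‖z - γp‖) ≤ R := by
    intro z
    constructor
    · intro h
      rw [← hE z]
      exact le_trans (ultra_sub_le _ _) (max_le h hvR)
    · intro h
      have h2 : ‖φ.eval z - v‖ ≤ R := by rw [hE z]; exact h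
      calc ‖φ.eval z‖ = ‖(φ.eval z - v) + v‖ := by congr 1; ring
        _ ≤ max ‖φ.eval z - v‖ ‖v‖ := ultra_add_le _ _
        _ ≤ R := max_le h2 hvR
  have h2L : ‖(2:L)‖ = 1 := by
    have h := hres 2 (by norm_num)
    push_cast at h
    exact h
  have h3L : ‖(3:L)‖ = 1 := by
    have h := hres 3 (by norm_num)
    push_cast at h
    exact h
  have hdm : (2:L) * (ωm - γp) + (ωm - ωp) = 0 := by
    have hd : (Polynomial.derivative φ).eval ωm
        = a * ((ωm - ωp) * ((2:L) * (ωm - γp) + (ωm - ωp))) := by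
      conv_lhs => rw [hφeq]
      simp only [derivative_add, derivative_mul, derivative_pow, derivative_sub,
        derivative_X, derivative_C, eval_add, eval_mul, eval_pow,
        eval_sub, eval_X, eval_C, eval_one, eval_zero, zero_mul, mul_zero,
        add_zero, zero_add, eval_natCast]
      push_cast
      ring
    rw [hcm] at hd
    rcases mul_eq_zero.mp hd.symm with h | h
    · exact absurd h hane
    rcases mul_eq_zero.mp h with h' | h'
    · exact absurd (sub_eq_zero.mp h') (Ne.symm hne)
    · exact h'
  set t := ‖γp - ωp‖ with htdef
  have htpos : 0 < t := by
    rw [htdef, norm_pos_iff]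
    exact sub_ne_zero.mpr hγne
  have htm : ‖ωm - ωp‖ = t := by
    have hd1 : (2:L) * (γp - ωp) = 3 * (ωm - ωp) := by linear_combination (-1 : L) * hdm
    have h := congrArg norm hd1
    rw [norm_mul, norm_mul, h2L, h3L, one_mul, one_mul] at h
    exact h.symm
  have hγm : ‖ωm - γp‖ = t := by
    have hd2 : (2:L) * (ωm - γp) = -(ωm - ωp) := by linear_combination hdm
    have h := congrArg norm hd2
    rw [norm_mul, h2L, one_mul, norm_neg, htm] at h
    exact h
  have hnear : ∀ z : L, ‖z - ωp‖ < t → ‖z - γp‖ = t := by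
    intro z hz
    have he : z - γp = (z - ωp) - (γp - ωp) := by ring
    rw [htdef] at hz ⊢
    rw [he, norm_sub_eq_right hz]
  have hfar : ∀ z : L, t < ‖z - ωp‖ → ‖z - γp‖ = ‖z - ωp‖ := by
    intro z hz
    have he : z - γp = (z - ωp) - (γp - ωp) := by ring
    rw [htdef] at hz
    rw [he, norm_sub_eq_left hz]
  have hnear' : ∀ z : L, ‖z - γp‖ < t → ‖z - ωp‖ = t := by
    intro z hz
    have he : z - ωp = (γp - ωp) + (z - γp) := by ring
    rw [htdef] at hz ⊢
    rw [he, norm_add_eq_left hz]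
  -- filled Julia set facts
  have hKD : ∀ z ∈ filledJulia φ, ‖z‖ ≤ R := by
    intro z hz
    by_contra h
    push_neg at h
    exact hz (cubic_escape φ h3 h)
  have hKmap : ∀ z ∈ filledJulia φ, φ.eval z ∈ filledJulia φ := by
    intro z hz htend
    apply hz
    have hfe : (fun n => ‖(fun w => φ.eval w)^[n] (φ.eval z)‖)
        = fun n => ‖(fun w => φ.eval w)^[n + 1] z‖ := by
      funext n
      rw [Function.iterate_succ_apply]
    rw [hfe] at htend
    exact (Filter.tendsto_add_atTop_iff_nat 1).mp htend
  have hpreD : ∀ z : L, ‖φ.eval z‖ ≤ R → ‖z‖ ≤ R := by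
    intro z h
    by_contra hc
    push_neg at hc
    have hg := cubic_grow φ h3 hc
    rw [← ha] at hg
    have hz2 : R ^ 2 ≤ ‖z‖ ^ 2 := by nlinarith
    have k1 : ‖a‖ * (R ^ 2 * ‖z‖) ≤ ‖a‖ * (‖z‖ ^ 2 * ‖z‖) :=
      mul_le_mul_of_nonneg_left (mul_le_mul_of_nonneg_right hz2 (norm_nonneg z)) hapos.le
    have k2 : ‖z‖ ≤ ‖a‖ * (R ^ 2 * ‖z‖) := by nlinarith
    rw [hg] at h
    nlinarith [k1, k2, hc, h]
  rcases le_or_gt (‖a‖ * t ^ 3) R with hsmall | hbig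
  · -- contradiction case
    exfalso
    have hKball : ∀ z ∈ filledJulia φ, ‖z - ωp‖ ^ 3 ≤ R / ‖a‖ := by
      intro z hz
      have h1 : ‖φ.eval z‖ ≤ R := hKD _ (hKmap z hz)
      have hEz : ‖a‖ * (‖z - ωp‖ ^ 2 * ‖z - γp‖) ≤ R := (hin z).mp h1
      rcases le_or_gt ‖z - ωp‖ t with h | h
      · calc ‖z - ωp‖ ^ 3 ≤ t ^ 3 := pow_le_pow_left₀ (norm_nonneg _) h 3
          _ ≤ R / ‖a‖ := by rw [le_div_iff₀ hapos]; linarith [hsmall]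
      · rw [hfar z h] at hEz
        rw [le_div_iff₀ hapos]
        nlinarith [norm_nonneg (z - ωp)]
    have hdiv : R / ‖a‖ ≤ R ^ 3 := by
      rw [div_le_iff₀ hapos]
      nlinarith [hRpos]
    rcases lt_or_eq_of_le hdiv with hlt | heq
    · -- diam K ≤ ρ < R
      set ρ : ℝ := (R / ‖a‖) ^ ((1:ℝ)/3) with hρdef
      have hRapos : 0 < R / ‖a‖ := div_pos hRpos hapos
      have hρpos : 0 < ρ := Real.rpow_pos_of_pos hRapos _
      have hρ3 : ρ ^ (3:ℕ) = R / ‖a‖ := by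
        rw [hρdef, ← Real.rpow_natCast ((R / ‖a‖) ^ ((1:ℝ)/3)) 3, ← Real.rpow_mul hRapos.le]
        norm_num
      have hρR : ρ < R := by
        have : ρ ^ (3:ℕ) < R ^ (3:ℕ) := by rw [hρ3]; exact_mod_cast hlt
        exact lt_of_pow_lt_pow_left₀ 3 hRpos.le this
      have hdiam : Metric.diam (filledJulia φ) ≤ ρ := by
        apply Metric.diam_le_of_forall_dist_le hρpos.le
        intro x hx y hy
        have hx' : ‖x - ωp‖ ≤ ρ := by
          have := hKball x hx
          rw [← hρ3] at this
          exact le_of_pow_le_pow_left₀ (by norm_num) hρpos.le this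
        have hy' : ‖y - ωp‖ ≤ ρ := by
          have := hKball y hy
          rw [← hρ3] at this
          exact le_of_pow_le_pow_left₀ (by norm_num) hρpos.le this
        have he : x - y = (x - ωp) - (y - ωp) := by ring
        rw [dist_eq_norm, he]
        exact le_trans (ultra_sub_le _ _) (max_le hx' hy')
      rw [← hnorm] at hdiam
      linarith
    · -- invariance case : ‖a‖ * R ^ 2 = 1
      have haR2 : ‖a‖ * R ^ 3 = R := by
        have : R = R ^ 3 * ‖a‖ := by
          rw [← heq]
          field_simp
        linarith [this]
      have htR : t ≤ R := by
        have h1 : t ^ 3 ≤ R ^ 3 := by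
          rw [← heq]
          rw [le_div_iff₀ hapos]
          linarith [hsmall]
        exact le_of_pow_le_pow_left₀ (by norm_num) hRpos.le h1
      have hωpD : ‖ωp‖ ≤ R := hpreD ωp (by rw [← hvdef]; exact hvR)
      have hγpD : ‖γp‖ ≤ R := by
        have he : γp = (γp - ωp) + ωp := by ring
        rw [he]
        refine le_trans (ultra_add_le _ _) (max_le ?_ hωpD)
        rw [← htdef]; exact htR
      have hfwd : ∀ z : L, ‖z‖ ≤ R → ‖φ.eval z‖ ≤ R := by
        intro z hz
        apply (hin z).mpr
        have h1 : ‖z - ωp‖ ≤ R := le_trans (ultra_sub_le _ _) (max_le hz hωpD)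
        have h2 : ‖z - γp‖ ≤ R := le_trans (ultra_sub_le _ _) (max_le hz hγpD)
        calc ‖a‖ * (‖z - ωp‖ ^ 2 * ‖z - γp‖) ≤ ‖a‖ * (R ^ 2 * R) := by
              refine mul_le_mul_of_nonneg_left ?_ (norm_nonneg _)
              refine mul_le_mul ?_ h2 (norm_nonneg _) (by positivity)
              exact pow_le_pow_left₀ (norm_nonneg _) h1 2
          _ = ‖a‖ * R ^ 3 := by ring
          _ = R := haR2
      have hbdd : ∀ z : L, ‖z‖ ≤ R → z ∈ filledJulia φ := by
        intro z hz htend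
        have horb : ∀ n : ℕ, ‖(fun w => φ.eval w)^[n] z‖ ≤ R := by
          intro n
          induction n with
          | zero => simpa using hz
          | succ n ih =>
            rw [Function.iterate_succ_apply']
            exact hfwd _ ih
        obtain ⟨n, hn⟩ := (htend.eventually_gt_atTop R).exists
        exact absurd (horb n) (not_le.mpr hn)
      apply hesc
      apply hbdd
      have he : ωm = (ωm - ωp) + ωp := by ring
      rw [he]
      refine le_trans (ultra_add_le _ _) (max_le ?_ hωpD)
      rw [htm]; exact htR
  · -- main case
    set r2 : ℝ := Real.sqrt (R / (‖a‖ * t)) with hr2def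
    set r1 : ℝ := R / (‖a‖ * t ^ 2) with hr1def
    have hatpos : 0 < ‖a‖ * t := mul_pos hapos htpos
    have hr2sq : r2 ^ 2 = R / (‖a‖ * t) := Real.sq_sqrt (le_of_lt (div_pos hRpos hatpos))
    have hr2pos : 0 < r2 := Real.sqrt_pos.mpr (div_pos hRpos hatpos)
    have hr1pos : 0 < r1 := div_pos hRpos (mul_pos hapos (pow_pos htpos 2))
    have hr2t : r2 < t := by
      have h1 : r2 ^ 2 < t ^ 2 := by
        rw [hr2sq, div_lt_iff₀ hatpos]
        nlinarith [hbig]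
      exact lt_of_pow_lt_pow_left₀ 2 htpos.le h1
    have hr1t : r1 < t := by
      rw [hr1def, div_lt_iff₀ (mul_pos hapos (pow_pos htpos 2))]
      nlinarith [hbig]
    have haet : ‖a‖ * (r2 ^ 2 * t) = R := by
      rw [hr2sq]
      field_simp
    have haet1 : ‖a‖ * (t ^ 2 * r1) = R := by
      rw [hr1def]
      field_simp
    set Bω : Set L := closedBall ωp r2 with hBωdef
    set Bγ : Set L := closedBall γp r1 with hBγdef
    have hmemBω : ∀ z : L, z ∈ Bω ↔ ‖z - ωp‖ ≤ r2 := by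
      intro z; rw [hBωdef, mem_closedBall, dist_eq_norm]
    have hmemBγ : ∀ z : L, z ∈ Bγ ↔ ‖z - γp‖ ≤ r1 := by
      intro z; rw [hBγdef, mem_closedBall, dist_eq_norm]
    have hdisj : ∀ z : L, z ∈ Bω → z ∈ Bγ → False := by
      intro z h1 h2
      rw [hmemBω] at h1
      rw [hmemBγ] at h2
      have hlt : t < t := by
        calc t = ‖(z - ωp) - (z - γp)‖ := by
              rw [htdef]; congr 1; ring
          _ ≤ max ‖z - ωp‖ ‖z - γp‖ := ultra_sub_le _ _
          _ ≤ max r2 r1 := max_le_max h1 h2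
          _ < t := max_lt hr2t hr1t
      exact lt_irrefl t hlt
    have hsub1 : ∀ z : L, z ∈ Bω → ‖a‖ * (‖z - ωp‖ ^ 2 * ‖z - γp‖) ≤ R := by
      intro z hz
      rw [hmemBω] at hz
      have hzt : ‖z - ωp‖ < t := lt_of_le_of_lt hz hr2t
      rw [hnear z hzt]
      calc ‖a‖ * (‖z - ωp‖ ^ 2 * t) ≤ ‖a‖ * (r2 ^ 2 * t) := by
            refine mul_le_mul_of_nonneg_left ?_ (norm_nonneg _)
            exact mul_le_mul_of_nonneg_right (pow_le_pow_left₀ (norm_nonneg _) hz 2) htpos.le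
        _ = R := haet
    have hsub2 : ∀ z : L, z ∈ Bγ → ‖a‖ * (‖z - ωp‖ ^ 2 * ‖z - γp‖) ≤ R := by
      intro z hz
      rw [hmemBγ] at hz
      have hzt : ‖z - γp‖ < t := lt_of_le_of_lt hz hr1t
      rw [hnear' z hzt]
      calc ‖a‖ * (t ^ 2 * ‖z - γp‖) ≤ ‖a‖ * (t ^ 2 * r1) := by
            refine mul_le_mul_of_nonneg_left ?_ (norm_nonneg _)
            exact mul_le_mul_of_nonneg_left hz (by positivity)
        _ = R := haet1
    have hsup : ∀ z : L, ‖a‖ * (‖z - ωp‖ ^ 2 * ‖z - γp‖) ≤ R → z ∈ Bω ∪ Bγ := by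
      intro z hEz
      rcases lt_trichotomy ‖z - ωp‖ t with hlt | heq | hgt
      · left
        rw [hmemBω]
        rw [hnear z hlt] at hEz
        have h2 : ‖z - ωp‖ ^ 2 ≤ r2 ^ 2 := by
          rw [hr2sq, le_div_iff₀ hatpos]
          nlinarith [htpos, norm_nonneg (z - ωp)]
        exact le_of_pow_le_pow_left₀ (by norm_num) hr2pos.le h2
      · right
        rw [hmemBγ, hr1def, le_div_iff₀ (by positivity)]
        rw [heq] at hEz
        nlinarith [hEz]
      · exfalso
        rw [hfar z hgt] at hEz
        have h1 : t ^ 3 < ‖z - ωp‖ ^ 3 := pow_lt_pow_left₀ hgt htpos.le (by norm_num)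
        nlinarith [mul_lt_mul_of_pos_left h1 hapos]
    have hpre : (fun z => φ.eval z)^[1] ⁻¹' (closedBall 0 R) = Bω ∪ Bγ := by
      ext z
      simp only [Function.iterate_one, Set.mem_preimage, mem_closedBall_zero_iff]
      constructor
      · intro h
        exact hsup z ((hin z).mp h)
      · intro h
        apply (hin z).mpr
        rcases h with h | h
        · exact hsub1 z h
        · exact hsub2 z h
    have hgapex2 : ∃ e : L, r2 < ‖e‖ ∧ ‖e‖ < t := by
      obtain ⟨x, hx0, hx⟩ := hdense ((r2 + t)/2) (by linarith) ((t - r2)/2) (by linarith)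
      have h := abs_lt.mp hx
      exact ⟨x, by constructor <;> linarith [h.1, h.2]⟩
    have hgapex1 : ∃ e : L, r1 < ‖e‖ ∧ ‖e‖ < t := by
      obtain ⟨x, hx0, hx⟩ := hdense ((r1 + t)/2) (by linarith) ((t - r1)/2) (by linarith)
      have h := abs_lt.mp hx
      exact ⟨x, by constructor <;> linarith [h.1, h.2]⟩
    have hgapout : ∀ b e : L, ‖b - ωp‖ ≤ r2 → r2 < ‖e‖ → ‖e‖ < t → b + e ∉ Bω ∪ Bγ := by
      intro b e hb he1 he2 hmem
      have hbe : ‖b + e - ωp‖ = ‖e‖ := by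
        have heq : b + e - ωp = e + (b - ωp) := by ring
        rw [heq, norm_add_eq_left (lt_of_le_of_lt hb he1)]
      rcases hmem with h | h
      · rw [hmemBω, hbe] at h
        linarith
      · rw [hmemBγ] at h
        have hh : ‖b + e - γp‖ = t := hnear _ (by rw [hbe]; exact he2)
        rw [hh] at h
        linarith
    have hgapout' : ∀ b e : L, ‖b - γp‖ ≤ r1 → r1 < ‖e‖ → ‖e‖ < t → b + e ∉ Bω ∪ Bγ := by
      intro b e hb he1 he2 hmem
      have hbe : ‖b + e - γp‖ = ‖e‖ := by
        have heq : b + e - γp = e + (b - γp) := by ring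
        rw [heq, norm_add_eq_left (lt_of_le_of_lt hb he1)]
      rcases hmem with h | h
      · rw [hmemBω] at h
        have hh : ‖b + e - ωp‖ = t := hnear' _ (by rw [hbe]; exact he2)
        rw [hh] at h
        linarith [hr2t]
      · rw [hmemBγ, hbe] at h
        linarith
    have hdynBω : IsDynBall φ 1 Bω := by
      refine ⟨⟨ωp, r2, hr2pos, hBωdef⟩, ?_, ?_⟩
      · rw [hpre]; exact Set.subset_union_left
      · rintro B' ⟨b, r', hr', rfl⟩ hsub hsub'
        rw [hpre] at hsub'
        have hωpB' : ωp ∈ closedBall b r' := hsub (mem_closedBall_self hr2pos.le)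
        refine Set.Subset.antisymm ?_ hsub
        intro y hy
        rw [hmemBω]
        by_contra hyc
        push_neg at hyc
        have hyB : y ∈ Bγ := by
          rcases hsub' hy with h | h
          · rw [hmemBω] at h; linarith
          · exact h
        have hyω : ‖y - ωp‖ = t := hnear' y (lt_of_le_of_lt ((hmemBγ y).mp hyB) hr1t)
        have hdyω : dist y ωp ≤ r' := le_trans (IsUltrametricDist.dist_triangle_max y b ωp)
            (max_le (mem_closedBall.mp hy) (by rw [dist_comm]; exact mem_closedBall.mp hωpB'))
        rw [dist_eq_norm, hyω] at hdyω
        obtain ⟨e, he1, he2⟩ := hgapex2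
        have hmem : ωp + e ∈ closedBall b r' := by
          rw [mem_closedBall]
          refine le_trans (IsUltrametricDist.dist_triangle_max _ ωp b)
            (max_le ?_ (mem_closedBall.mp hωpB'))
          rw [dist_eq_norm]
          have hh : ωp + e - ωp = e := by ring
          rw [hh]
          linarith
        exact hgapout ωp e (by simpa using hr2pos.le) he1 he2 (hsub' hmem)
    have hdynBγ : IsDynBall φ 1 Bγ := by
      refine ⟨⟨γp, r1, hr1pos, hBγdef⟩, ?_, ?_⟩
      · rw [hpre]; exact Set.subset_union_right
      · rintro B' ⟨b, r', hr', rfl⟩ hsub hsub'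
        rw [hpre] at hsub'
        have hγpB' : γp ∈ closedBall b r' := hsub (mem_closedBall_self hr1pos.le)
        refine Set.Subset.antisymm ?_ hsub
        intro y hy
        rw [hmemBγ]
        by_contra hyc
        push_neg at hyc
        have hyB : y ∈ Bω := by
          rcases hsub' hy with h | h
          · exact h
          · rw [hmemBγ] at h; linarith
        have hyγ : ‖y - γp‖ = t := hnear y (lt_of_le_of_lt ((hmemBω y).mp hyB) hr2t)
        have hdyγ : dist y γp ≤ r' := le_trans (IsUltrametricDist.dist_triangle_max y b γp)
            (max_le (mem_closedBall.mp hy) (by rw [dist_comm]; exact mem_closedBall.mp hγpB'))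
        rw [dist_eq_norm, hyγ] at hdyγ
        obtain ⟨e, he1, he2⟩ := hgapex1
        have hmem : γp + e ∈ closedBall b r' := by
          rw [mem_closedBall]
          refine le_trans (IsUltrametricDist.dist_triangle_max _ γp b)
            (max_le ?_ (mem_closedBall.mp hγpB'))
          rw [dist_eq_norm]
          have hh : γp + e - γp = e := by ring
          rw [hh]
          linarith
        exact hgapout' γp e (by simpa using hr1pos.le) he1 he2 (hsub' hmem)
    have hclass : ∀ B, IsDynBall φ 1 B → B = Bω ∨ B = Bγ := by
      rintro B ⟨⟨b, r, hr, rfl⟩, hBpre, hmax⟩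
      have hbB : b ∈ closedBall b r := mem_closedBall_self hr.le
      have hbU : b ∈ Bω ∪ Bγ := by rw [← hpre]; exact hBpre hbB
      rcases hbU with hb | hb
      · left
        have hBsub : closedBall b r ⊆ Bω := by
          intro y hy
          by_contra hyc
          have hyB : y ∈ Bγ := by
            have hyU : y ∈ Bω ∪ Bγ := by rw [← hpre]; exact hBpre hy
            rcases hyU with h | h
            · exact absurd h hyc
            · exact h
          have hby : t ≤ ‖y - b‖ := by
            by_contra hc
            push_neg at hc
            have hyb : ‖y - γp‖ ≤ r1 := (hmemBγ y).mp hyB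
            have hbω : ‖b - ωp‖ ≤ r2 := (hmemBω b).mp hb
            have hmax3 : t ≤ max ‖γp - y‖ (max ‖y - b‖ ‖b - ωp‖) := by
              rw [htdef]
              calc ‖γp - ωp‖ = ‖(γp - y) + ((y - b) + (b - ωp))‖ := by congr 1; ring
                _ ≤ max ‖γp - y‖ ‖(y - b) + (b - ωp)‖ := ultra_add_le _ _
                _ ≤ max ‖γp - y‖ (max ‖y - b‖ ‖b - ωp‖) :=
                    max_le_max le_rfl (ultra_add_le _ _)
            have hlt : max ‖γp - y‖ (max ‖y - b‖ ‖b - ωp‖) < t := by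
              refine max_lt ?_ (max_lt hc (lt_of_le_of_lt hbω hr2t))
              rw [norm_sub_rev]
              exact lt_of_le_of_lt hyb hr1t
            linarith
          obtain ⟨e, he1, he2⟩ := hgapex2
          have hbyr : ‖y - b‖ ≤ r := by
            rw [← dist_eq_norm y b]
            exact mem_closedBall.mp hy
          have hmem : b + e ∈ closedBall b r := by
            rw [mem_closedBall, dist_eq_norm]
            have hh : b + e - b = e := by ring
            rw [hh]
            linarith
          have hmem' : b + e ∈ Bω ∪ Bγ := by rw [← hpre]; exact hBpre hmem
          exact hgapout b e ((hmemBω b).mp hb) he1 he2 hmem'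
        exact (hmax Bω ⟨ωp, r2, hr2pos, hBωdef⟩ hBsub
          (by rw [hpre]; exact Set.subset_union_left)).symm
      · right
        have hBsub : closedBall b r ⊆ Bγ := by
          intro y hy
          by_contra hyc
          have hyB : y ∈ Bω := by
            have hyU : y ∈ Bω ∪ Bγ := by rw [← hpre]; exact hBpre hy
            rcases hyU with h | h
            · exact h
            · exact absurd h hyc
          have hby : t ≤ ‖y - b‖ := by
            by_contra hc
            push_neg at hc
            have hyb : ‖y - ωp‖ ≤ r2 := (hmemBω y).mp hyB
            have hbγ : ‖b - γp‖ ≤ r1 := (hmemBγ b).mp hb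
            have hmax3 : t ≤ max ‖ωp - y‖ (max ‖y - b‖ ‖b - γp‖) := by
              rw [htdef]
              calc ‖γp - ωp‖ = ‖(ωp - y) + ((y - b) + (b - γp))‖ := by
                    rw [norm_sub_rev]; congr 1; ring
                _ ≤ max ‖ωp - y‖ ‖(y - b) + (b - γp)‖ := ultra_add_le _ _
                _ ≤ max ‖ωp - y‖ (max ‖y - b‖ ‖b - γp‖) :=
                    max_le_max le_rfl (ultra_add_le _ _)
            have hlt : max ‖ωp - y‖ (max ‖y - b‖ ‖b - γp‖) < t := by
              refine max_lt ?_ (max_lt hc (lt_of_le_of_lt hbγ hr1t))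
              rw [norm_sub_rev]
              exact lt_of_le_of_lt hyb hr2t
            linarith
          obtain ⟨e, he1, he2⟩ := hgapex1
          have hbyr : ‖y - b‖ ≤ r := by
            rw [← dist_eq_norm y b]
            exact mem_closedBall.mp hy
          have hmem : b + e ∈ closedBall b r := by
            rw [mem_closedBall, dist_eq_norm]
            have hh : b + e - b = e := by ring
            rw [hh]
            linarith
          have hmem' : b + e ∈ Bω ∪ Bγ := by rw [← hpre]; exact hBpre hmem
          exact hgapout' b e ((hmemBγ b).mp hb) he1 he2 hmem'
        exact (hmax Bγ ⟨γp, r1, hr1pos, hBγdef⟩ hBsub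
          (by rw [hpre]; exact Set.subset_union_right)).symm
    have hBne : Bω ≠ Bγ := by
      intro h
      apply hdisj ωp (mem_closedBall_self hr2pos.le)
      rw [← h]
      exact mem_closedBall_self hr2pos.le
    have hc1 : φ.eval ωm ∉ closedBall (0:L) R := by
      rw [mem_closedBall_zero_iff]
      intro h
      have hEm : ‖a‖ * (‖ωm - ωp‖ ^ 2 * ‖ωm - γp‖) ≤ R := (hin ωm).mp h
      rw [htm, hγm] at hEm
      nlinarith [hbig]
    have hvw : ∀ w : L, ‖w‖ ≤ R → ‖v - w‖ ≤ R := fun w hw =>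
      le_trans (ultra_sub_le v w) (max_le hvR hw)
    have hcount : ∀ w : L, ‖w‖ ≤ R →
        (∑ᶠ z ∈ {z ∈ Bω | φ.eval z = w}, localDeg φ z) = 2 ∧
        (∑ᶠ z ∈ {z ∈ Bγ | φ.eval z = w}, localDeg φ z) = 1 := by
      intro w hw
      set ψ : Polynomial L := φ - C w with hψdef
      have hψdeg : ψ.natDegree = 3 := by rw [hψdef, natDegree_sub_C, h3]
      have hψne : ψ ≠ 0 := fun h => by simp [h] at hψdeg
      have hψlead : ψ.leadingCoeff = a := by
        rw [Polynomial.leadingCoeff, hψdeg, hψdef, ha]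
        simp [Polynomial.leadingCoeff, h3, coeff_C]
      set M : Multiset L := ψ.roots with hM
      have hMcard : Multiset.card M = 3 := by
        rw [hM, splits_iff_card_roots.mp (IsAlgClosed.splits ψ), hψdeg]
      have hψz : ∀ x : L, ψ.eval x = φ.eval x - w := by
        intro x
        rw [hψdef]
        simp
      have hprod : ψ = C a * (M.map fun z => X - C z).prod := by
        conv_lhs => rw [(IsAlgClosed.splits ψ).eq_prod_roots]
        rw [hψlead]
      have hevalprod : ∀ x : L, ‖φ.eval x - w‖ = ‖a‖ * ((M.map fun z => ‖x - z‖).prod) := by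
        intro x
        rw [← hψz x]
        conv_lhs => rw [hprod]
        rw [eval_mul, eval_C, eval_multiset_prod, Multiset.map_map, norm_mul,
          norm_multiset_prod', Multiset.map_map]
        congr 2
        exact Multiset.map_congr rfl fun z _ => by simp
      have hrootw : ∀ z ∈ M, φ.eval z = w := by
        intro z hz
        have h0 := (mem_roots'.mp (by rw [← hM]; exact hz)).2
        rw [Polynomial.IsRoot, hψz] at h0
        exact sub_eq_zero.mp h0
      have hrootmem : ∀ z ∈ M, z ∈ Bω ∪ Bγ := by
        intro z hz
        apply hsup
        apply (hin z).mp
        rw [hrootw z hz]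
        exact hw
      set Mω : Multiset L := M.filter (fun z => z ∈ Bω) with hMω
      set Mγ : Multiset L := M.filter (fun z => ¬ z ∈ Bω) with hMγ
      have hMsplit : Mω + Mγ = M := Multiset.filter_add_not _ M
      have hMωB : ∀ z ∈ Mω, z ∈ Bω := by
        intro z hz
        rw [hMω, Multiset.mem_filter] at hz
        exact hz.2
      have hMωM : ∀ z ∈ Mω, z ∈ M := by
        intro z hz
        rw [hMω, Multiset.mem_filter] at hz
        exact hz.1
      have hMγM : ∀ z ∈ Mγ, z ∈ M := by
        intro z hz
        rw [hMγ, Multiset.mem_filter] at hz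
        exact hz.1
      have hMγB : ∀ z ∈ Mγ, z ∈ Bγ := by
        intro z hz
        rw [hMγ, Multiset.mem_filter] at hz
        rcases hrootmem z hz.1 with h | h
        · exact absurd h hz.2
        · exact h
      have hcards : Multiset.card Mω + Multiset.card Mγ = 3 := by
        rw [← Multiset.card_add, hMsplit]
        exact hMcard
      have hprodeval : ∀ (x : L) (c d : ℝ), (∀ z ∈ Mω, ‖x - z‖ = c) →
          (∀ z ∈ Mγ, ‖x - z‖ = d) →
          ‖φ.eval x - w‖ = ‖a‖ * (c ^ Multiset.card Mω * d ^ Multiset.card Mγ) := by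
        intro x c d hc hd
        rw [hevalprod x, ← hMsplit, Multiset.map_add, Multiset.prod_add,
          multiset_map_prod_const Mω _ c hc, multiset_map_prod_const Mγ _ d hd]
      have hdγ : ∀ z ∈ Mγ, ‖ωp - z‖ = t := by
        intro z hz
        rw [norm_sub_rev]
        exact hnear' z (lt_of_le_of_lt ((hmemBγ z).mp (hMγB z hz)) hr1t)
      have hdω : ∀ z ∈ Mω, ‖γp - z‖ = t := by
        intro z hz
        rw [norm_sub_rev]
        exact hnear z (lt_of_le_of_lt ((hmemBω z).mp (hMωB z hz)) hr2t)
      have hk0 : Multiset.card Mω ≠ 0 := by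
        intro hk
        have hMω0 : Mω = 0 := Multiset.card_eq_zero.mp hk
        have hkγ : Multiset.card Mγ = 3 := by omega
        have heqp := hprodeval ωp 1 t (fun z hz => absurd hz (by rw [hMω0]; simp)) hdγ
        rw [hk, hkγ] at heqp
        have hvwR := hvw w hw
        rw [← hvdef] at heqp
        rw [heqp] at hvwR
        simp only [pow_zero, one_mul] at hvwR
        nlinarith [hbig]
      have hk3 : Multiset.card Mω ≠ 3 := by
        intro hk
        have hkγ : Multiset.card Mγ = 0 := by omega
        have hMγ0 : Mγ = 0 := Multiset.card_eq_zero.mp hkγ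
        have heqp := hprodeval γp t 1 hdω (fun z hz => absurd hz (by rw [hMγ0]; simp))
        rw [hk, hkγ] at heqp
        rw [hγ] at heqp
        have hvwR := hvw w hw
        rw [heqp] at hvwR
        simp only [pow_zero, mul_one] at hvwR
        nlinarith [hbig]
      have hk1 : Multiset.card Mω ≠ 1 := by
        intro hk
        have hkγ : Multiset.card Mγ = 2 := by omega
        obtain ⟨e, he1, he2⟩ := hgapex2
        have hxω : (ωp + e) - ωp = e := by ring
        have hxγ : ‖(ωp + e) - γp‖ = t := hnear (ωp + e) (by rw [hxω]; exact he2)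
        have hcMω : ∀ z ∈ Mω, ‖(ωp + e) - z‖ = ‖e‖ := by
          intro z hz
          have hzb : ‖ωp - z‖ ≤ r2 := by
            rw [norm_sub_rev]
            exact (hmemBω z).mp (hMωB z hz)
          have hq : (ωp + e) - z = e + (ωp - z) := by ring
          rw [hq, norm_add_eq_left (lt_of_le_of_lt hzb he1)]
        have hcMγ : ∀ z ∈ Mγ, ‖(ωp + e) - z‖ = t := by
          intro z hz
          have hzb : ‖γp - z‖ ≤ r1 := by
            rw [norm_sub_rev]
            exact (hmemBγ z).mp (hMγB z hz)
          have hq : (ωp + e) - z = ((ωp + e) - γp) + (γp - z) := by ring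
          rw [hq, norm_add_eq_left (by rw [hxγ]; exact lt_of_le_of_lt hzb hr1t), hxγ]
        have heqA := hprodeval (ωp + e) (‖e‖) t hcMω hcMγ
        rw [hk, hkγ] at heqA
        have hEx : ‖φ.eval (ωp + e) - v‖ = ‖a‖ * (‖e‖ ^ 2 * t) := by
          rw [hE (ωp + e), hxω, hxγ]
        have hExR : R < ‖φ.eval (ωp + e) - v‖ := by
          rw [hEx]
          calc R = ‖a‖ * (r2 ^ 2 * t) := haet.symm
            _ < ‖a‖ * (‖e‖ ^ 2 * t) := by
                refine mul_lt_mul_of_pos_left ?_ hapos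
                refine mul_lt_mul_of_pos_right ?_ htpos
                exact pow_lt_pow_left₀ he1 hr2pos.le (by norm_num)
        have heqB : ‖φ.eval (ωp + e) - w‖ = ‖a‖ * (‖e‖ ^ 2 * t) := by
          have hq : φ.eval (ωp + e) - w = (φ.eval (ωp + e) - v) + (v - w) := by ring
          rw [hq, norm_add_eq_left (lt_of_le_of_lt (hvw w hw) hExR), hEx]
        rw [heqB] at heqA
        have hepos : 0 < ‖e‖ := lt_trans hr2pos he1
        have h1 : ‖e‖ ^ 2 * t = ‖e‖ ^ 1 * t ^ 2 := mul_left_cancel₀ (ne_of_gt hapos) heqA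
        nlinarith [mul_pos (mul_pos (sub_pos.mpr he2) hepos) htpos]
      have hkω2 : Multiset.card Mω = 2 := by
        have := hcards
        rcases Nat.lt_or_ge (Multiset.card Mω) 4 with h4 | h4
        · interval_cases h : Multiset.card Mω <;> omega
        · omega
      have hkγ1 : Multiset.card Mγ = 1 := by omega
      have hldeg : ∀ z ∈ M, localDeg φ z = Multiset.count z M := by
        intro z hz
        unfold localDeg
        rw [hrootw z hz, hM, Polynomial.count_roots, hψdef]
      constructor
      · have hset : {z ∈ Bω | φ.eval z = w} = (↑(Mω.toFinset) : Set L) := by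
          ext z
          rw [Set.mem_sep_iff, Finset.mem_coe, Multiset.mem_toFinset, hMω,
            Multiset.mem_filter]
          constructor
          · rintro ⟨h1, h2⟩
            refine ⟨?_, h1⟩
            rw [hM, mem_roots']
            refine ⟨hψne, ?_⟩
            rw [Polynomial.IsRoot, hψz, h2, sub_self]
          · rintro ⟨h1, h2⟩
            exact ⟨h2, hrootw z h1⟩
        rw [hset, finsum_mem_coe_finset]
        calc ∑ z ∈ Mω.toFinset, localDeg φ z
            = ∑ z ∈ Mω.toFinset, Multiset.count z M := by
              refine Finset.sum_congr rfl fun z hz => ?_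
              rw [Multiset.mem_toFinset] at hz
              exact hldeg z (hMωM z hz)
          _ = ∑ z ∈ Mω.toFinset, Multiset.count z Mω := by
              refine Finset.sum_congr rfl fun z hz => ?_
              rw [Multiset.mem_toFinset] at hz
              rw [hMω]
              exact (Multiset.count_filter_of_pos (hMωB z hz)).symm
          _ = Multiset.card Mω := Multiset.toFinset_sum_count_eq Mω
          _ = 2 := hkω2
      · have hset : {z ∈ Bγ | φ.eval z = w} = (↑(Mγ.toFinset) : Set L) := by
          ext z
          rw [Set.mem_sep_iff, Finset.mem_coe, Multiset.mem_toFinset, hMγ,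
            Multiset.mem_filter]
          constructor
          · rintro ⟨h1, h2⟩
            have hzM : z ∈ M := by
              rw [hM, mem_roots']
              refine ⟨hψne, ?_⟩
              rw [Polynomial.IsRoot, hψz, h2, sub_self]
            exact ⟨hzM, fun hB => hdisj z hB h1⟩
          · rintro ⟨h1, h2⟩
            have hzB : z ∈ Bγ := by
              rcases hrootmem z h1 with h | h
              · exact absurd h h2
              · exact h
            exact ⟨hzB, hrootw z h1⟩
        rw [hset, finsum_mem_coe_finset]
        calc ∑ z ∈ Mγ.toFinset, localDeg φ z
            = ∑ z ∈ Mγ.toFinset, Multiset.count z M := by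
              refine Finset.sum_congr rfl fun z hz => ?_
              rw [Multiset.mem_toFinset] at hz
              exact hldeg z (hMγM z hz)
          _ = ∑ z ∈ Mγ.toFinset, Multiset.count z Mγ := by
              refine Finset.sum_congr rfl fun z hz => ?_
              rw [Multiset.mem_toFinset] at hz
              have hnB : ¬ z ∈ Bω := by
                rw [hMγ, Multiset.mem_filter] at hz
                exact hz.2
              rw [hMγ]
              exact (Multiset.count_filter_of_pos
                (p := fun z : L => ¬ z ∈ Bω) (s := M) hnB).symm
          _ = Multiset.card Mγ := Multiset.toFinset_sum_count_eq Mγ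
          _ = 1 := hkγ1
    refine ⟨hc1, Bω, Bγ, hdynBω, ?_, hdynBγ, ?_, hBne, hclass, ⟨by norm_num, ?_⟩,
      ⟨le_refl 1, ?_⟩⟩
    · rw [hBωdef]
      exact mem_closedBall_self hr2pos.le
    · rw [hBγdef]
      exact mem_closedBall_self hr1pos.le
    · intro w hw
      exact (hcount w (mem_closedBall_zero_iff.mp hw)).1
    · intro w hw
      exact (hcount w (mem_closedBall_zero_iff.mp hw)).2
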